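/- Let a, b, c, d be nonnegative real numbers with b + d > 0 and a + c > 0, and consider the function L(p,q) = (1-p)^a · p^b · (1-q)^c · q^d on the constrained region {(p,q) ∈ [0,1]² : p ≤ q}. If a·d ≥ b·c (equivalently d/(c+d) ≥ b/(a+b) when a+b, c+d > 0), then L is maximized at p = b/(a+b), q = d/(c+d). If a·d < b·c, then L is maximized on the constraint boundary at p = q = (b+d)/(a+b+c+d). -/

import Mathlib

open Real

lemma gen_bound (a b c d p q m₁ m₂ : ℝ) (ha : 0 ≤ a) (hb : 0 ≤ b) (hc : 0 ≤ c) (hd : 0 ≤ d)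
    (hS : 0 < a + b + c + d)
    (hp0 : 0 ≤ p) (hp1 : p ≤ 1) (hq0 : 0 ≤ q) (hq1 : q ≤ 1)
    (hm10 : 0 < m₁) (hm11 : m₁ < 1) (hm20 : 0 < m₂) (hm21 : m₂ < 1)
    (hsum : a * ((1 - p) / (1 - m₁)) + b * (p / m₁) + c * ((1 - q) / (1 - m₂)) + d * (q / m₂)
      ≤ a + b + c + d) :
    (1 - p) ^ a * p ^ b * (1 - q) ^ c * q ^ d
      ≤ (1 - m₁) ^ a * m₁ ^ b * (1 - m₂) ^ c * m₂ ^ d := by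
  set S := a + b + c + d with hSdef
  have hSne : S ≠ 0 := hS.ne'
  set x₁ := (1 - p) / (1 - m₁) with hx₁def
  set x₂ := p / m₁ with hx₂def
  set x₃ := (1 - q) / (1 - m₂) with hx₃def
  set x₄ := q / m₂ with hx₄def
  have hx₁ : 0 ≤ x₁ := div_nonneg (by linarith) (by linarith)
  have hx₂ : 0 ≤ x₂ := div_nonneg hp0 hm10.le
  have hx₃ : 0 ≤ x₃ := div_nonneg (by linarith) (by linarith)
  have hx₄ : 0 ≤ x₄ := div_nonneg hq0 hm20.le
  have hbase : x₁ ^ (a/S) * x₂ ^ (b/S) * x₃ ^ (c/S) * x₄ ^ (d/S) ≤ 1 := by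
    have h1 := Real.geom_mean_le_arith_mean4_weighted
      (div_nonneg ha hS.le) (div_nonneg hb hS.le) (div_nonneg hc hS.le) (div_nonneg hd hS.le)
      hx₁ hx₂ hx₃ hx₄ (by field_simp; exact hSdef.symm)
    refine h1.trans ?_
    rw [div_mul_eq_mul_div, div_mul_eq_mul_div, div_mul_eq_mul_div, div_mul_eq_mul_div,
      ← add_div, ← add_div, ← add_div, div_le_one hS]
    exact hsum
  have key : x₁ ^ a * x₂ ^ b * x₃ ^ c * x₄ ^ d ≤ 1 := by
    have e : ∀ u : ℝ, ∀ x : ℝ, 0 ≤ x → (x ^ (u/S)) ^ S = x ^ u := by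
      intro u x hx
      rw [← Real.rpow_mul hx, div_mul_cancel₀ _ hSne]
    calc x₁ ^ a * x₂ ^ b * x₃ ^ c * x₄ ^ d
        = (x₁ ^ (a/S) * x₂ ^ (b/S) * x₃ ^ (c/S) * x₄ ^ (d/S)) ^ S := by
          rw [Real.mul_rpow (by positivity) (by positivity),
            Real.mul_rpow (by positivity) (by positivity),
            Real.mul_rpow (by positivity) (by positivity),
            e a x₁ hx₁, e b x₂ hx₂, e c x₃ hx₃, e d x₄ hx₄]
      _ ≤ 1 := Real.rpow_le_one (by positivity) hbase hS.le
  have heq : (1 - p) ^ a * p ^ b * (1 - q) ^ c * q ^ d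
      = ((1 - m₁) ^ a * m₁ ^ b * (1 - m₂) ^ c * m₂ ^ d) * (x₁ ^ a * x₂ ^ b * x₃ ^ c * x₄ ^ d) := by
    rw [hx₁def, hx₂def, hx₃def, hx₄def,
      Real.div_rpow (by linarith) (by linarith), Real.div_rpow hp0 hm10.le,
      Real.div_rpow (by linarith) (by linarith), Real.div_rpow hq0 hm20.le]
    have h1 : (0:ℝ) < (1 - m₁) ^ a := Real.rpow_pos_of_pos (by linarith) a
    have h2 : (0:ℝ) < m₁ ^ b := Real.rpow_pos_of_pos hm10 b
    have h3 : (0:ℝ) < (1 - m₂) ^ c := Real.rpow_pos_of_pos (by linarith) c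
    have h4 : (0:ℝ) < m₂ ^ d := Real.rpow_pos_of_pos hm20 d
    field_simp
    try ring
  rw [heq]
  calc ((1 - m₁) ^ a * m₁ ^ b * (1 - m₂) ^ c * m₂ ^ d) * (x₁ ^ a * x₂ ^ b * x₃ ^ c * x₄ ^ d)
      ≤ ((1 - m₁) ^ a * m₁ ^ b * (1 - m₂) ^ c * m₂ ^ d) * 1 :=
        mul_le_mul_of_nonneg_left key (by
          have h1 : (0:ℝ) ≤ (1 - m₁) ^ a := Real.rpow_nonneg (by linarith) a
          have h2 : (0:ℝ) ≤ m₁ ^ b := Real.rpow_nonneg hm10.le b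
          have h3 : (0:ℝ) ≤ (1 - m₂) ^ c := Real.rpow_nonneg (by linarith) c
          have h4 : (0:ℝ) ≤ m₂ ^ d := Real.rpow_nonneg hm20.le d
          positivity)
    _ = (1 - m₁) ^ a * m₁ ^ b * (1 - m₂) ^ c * m₂ ^ d := mul_one _

lemma single_bound (u v x : ℝ) (hu : 0 ≤ u) (hv : 0 ≤ v) (hx0 : 0 ≤ x) (hx1 : x ≤ 1) :
    (1 - x) ^ u * x ^ v ≤ (1 - v / (u + v)) ^ u * (v / (u + v)) ^ v := by
  rcases eq_or_lt_of_le hu with hu0 | hu0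
  · rcases eq_or_lt_of_le hv with hv0 | hv0
    · simp [← hu0, ← hv0]
    · -- u = 0, v > 0
      rw [← hu0]
      simp only [Real.rpow_zero, one_mul, zero_add, div_self hv0.ne', Real.one_rpow]
      exact Real.rpow_le_one hx0 hx1 hv
  · rcases eq_or_lt_of_le hv with hv0 | hv0
    · -- v = 0, u > 0
      rw [← hv0]
      simp only [Real.rpow_zero, mul_one, zero_div, sub_zero, Real.one_rpow]
      exact Real.rpow_le_one (by linarith) (by linarith) hu
    · -- interior
      have huv : 0 < u + v := by linarith
      have hm0 : 0 < v / (u + v) := div_pos hv0 huv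
      have hm1 : v / (u + v) < 1 := (div_lt_one huv).2 (by linarith)
      have h := gen_bound u v 0 0 x x (v / (u + v)) (1/2) hu hv le_rfl le_rfl
        (by linarith) hx0 hx1 hx0 hx1 hm0 hm1 (by norm_num) (by norm_num)
        (by
          have h1m : 1 - v / (u + v) = u / (u + v) := by field_simp; ring
          rw [h1m]
          have e1 : u * ((1 - x) / (u / (u + v))) = (1 - x) * (u + v) := by
            field_simp
          have e2 : v * (x / (v / (u + v))) = x * (u + v) := by
            field_simp
          rw [e1, e2]
          have : (1 - x) * (u + v) + x * (u + v) = u + v := by ring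
          simp only [zero_mul, add_zero]
          linarith)
      simpa using h

theorem stmt2 (a b c d : ℝ) (ha : 0 ≤ a) (hb : 0 ≤ b) (hc : 0 ≤ c) (hd : 0 ≤ d)
    (hbd : 0 < b + d) (hac : 0 < a + c) :
    (b * c ≤ a * d → ∀ p q : ℝ, 0 ≤ p → p ≤ q → q ≤ 1 →
        (1 - p) ^ a * p ^ b * (1 - q) ^ c * q ^ d
          ≤ (1 - b / (a + b)) ^ a * (b / (a + b)) ^ b
              * (1 - d / (c + d)) ^ c * (d / (c + d)) ^ d) ∧
    (a * d < b * c → ∀ p q : ℝ, 0 ≤ p → p ≤ q → q ≤ 1 →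
        (1 - p) ^ a * p ^ b * (1 - q) ^ c * q ^ d
          ≤ (1 - (b + d) / (a + b + c + d)) ^ a * ((b + d) / (a + b + c + d)) ^ b
              * (1 - (b + d) / (a + b + c + d)) ^ c * ((b + d) / (a + b + c + d)) ^ d) := by
  constructor
  · intro _ p q hp0 hpq hq1
    have hp1 : p ≤ 1 := hpq.trans hq1
    have hq0 : 0 ≤ q := hp0.trans hpq
    have h1 := single_bound a b p ha hb hp0 hp1
    have h2 := single_bound c d q hc hd hq0 hq1
    calc (1 - p) ^ a * p ^ b * (1 - q) ^ c * q ^ d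
        = ((1 - p) ^ a * p ^ b) * ((1 - q) ^ c * q ^ d) := by ring
      _ ≤ ((1 - b / (a + b)) ^ a * (b / (a + b)) ^ b)
            * ((1 - d / (c + d)) ^ c * (d / (c + d)) ^ d) := by
          have hL1 : (0:ℝ) ≤ (1 - p) ^ a * p ^ b :=
            mul_nonneg (Real.rpow_nonneg (by linarith) a) (Real.rpow_nonneg hp0 b)
          have hL2 : (0:ℝ) ≤ (1 - q) ^ c * q ^ d :=
            mul_nonneg (Real.rpow_nonneg (by linarith) c) (Real.rpow_nonneg hq0 d)
          exact mul_le_mul h1 h2 hL2 (hL1.trans h1)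
      _ = (1 - b / (a + b)) ^ a * (b / (a + b)) ^ b
            * (1 - d / (c + d)) ^ c * (d / (c + d)) ^ d := by ring
  · intro hlt p q hp0 hpq hq1
    have hp1 : p ≤ 1 := hpq.trans hq1
    have hq0 : 0 ≤ q := hp0.trans hpq
    have hS : 0 < a + b + c + d := by linarith
    set t := (b + d) / (a + b + c + d) with htdef
    have ht0 : 0 < t := div_pos hbd hS
    have ht1 : t < 1 := (div_lt_one hS).2 (by linarith)
    exact gen_bound a b c d p q t t ha hb hc hd hS hp0 hp1 hq0 hq1 ht0 ht1 ht0 ht1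
      (by
        have h1t : 1 - t = (a + c) / (a + b + c + d) := by
          rw [htdef]; field_simp; ring
        rw [h1t, htdef]
        have hacne : a + c ≠ 0 := hac.ne'
        have hbdne : b + d ≠ 0 := hbd.ne'
        have hkey : (0:ℝ) ≤ (q - p) * (b * c - a * d) :=
          mul_nonneg (by linarith) (by linarith)
        have hpos : (0:ℝ) < (a + c) * (b + d) := mul_pos hac hbd
        have expand : a * ((1 - p) / ((a + c) / (a + b + c + d)))
            + b * (p / ((b + d) / (a + b + c + d)))
            + c * ((1 - q) / ((a + c) / (a + b + c + d)))
            + d * (q / ((b + d) / (a + b + c + d)))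
            = ((a * (1 - p) + c * (1 - q)) * (b + d) + (b * p + d * q) * (a + c))
                * (a + b + c + d) / ((a + c) * (b + d)) := by
          field_simp
          ring
        rw [expand, div_le_iff₀ hpos]
        nlinarith [mul_nonneg hS.le hkey])
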